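/- If the sequence (i_1,…,i_n) is Ω-admissible and periodically extendable (ω_{i_1 i_n} = 1), then the spectral radius of the lifted product equals that of the original product: ρ(A^{(i_n)} A^{(i_{n-1})} ⋯ A^{(i_1)}) = ρ(A_{i_n} A_{i_{n-1}} ⋯ A_{i_1}). -/
import Mathlib


open Matrix Filter
open scoped Kronecker

/-- `seqProd A n = A (n-1) * ⋯ * A 1 * A 0`. -/
def seqProd {α : Type*} [Monoid α] (A : ℕ → α) (n : ℕ) : α :=
  ((List.range n).reverse.map A).prod

/-- The matrix `Ω_i = ω_i^T δ_i`: outer product of the `i`-th column of `ω`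
with the `i`-th standard basis row vector. -/
def OmegaM {N : ℕ} (ω : Matrix (Fin N) (Fin N) ℂ) (i : Fin N) :
    Matrix (Fin N) (Fin N) ℂ :=
  vecMulVec (fun j => ω j i) (fun k => if k = i then 1 else 0)

/-- Ω-admissibility of the finite sequence `i 0, …, i (n-1)`. -/
def Adm {N : ℕ} (ω : Matrix (Fin N) (Fin N) ℂ) (i : ℕ → Fin N) (n : ℕ) : Prop :=
  (∀ k, k + 1 < n → ω (i (k + 1)) (i k) = 1) ∧ ∃ j, ω j (i (n - 1)) = 1

/-- Ω-admissible and periodically extendable. -/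
def PerAdm {N : ℕ} (ω : Matrix (Fin N) (Fin N) ℂ) (i : ℕ → Fin N) (n : ℕ) : Prop :=
  Adm ω i n ∧ ω (i 0) (i (n - 1)) = 1

/-- Only the consecutive-transition condition (the set `W⁰`). -/
def AdmZero {N : ℕ} (ω : Matrix (Fin N) (Fin N) ℂ) (i : ℕ → Fin N) (n : ℕ) : Prop :=
  ∀ k, k + 1 < n → ω (i (k + 1)) (i k) = 1

/-- Extendability to an infinite admissible sequence (the set `W^∞`). -/
def AdmInf {N : ℕ} (ω : Matrix (Fin N) (Fin N) ℂ) (i : ℕ → Fin N) (n : ℕ) : Prop :=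
  ∃ j : ℕ → Fin N, (∀ k, k < n → j k = i k) ∧ ∀ k, ω (j (k + 1)) (j k) = 1

/-- The norm `|||M||| = max_i Σ_j ‖m_{ij}‖` on `N × N` block matrices with `d × d` blocks. -/
noncomputable def blockNorm {N d : ℕ} (nrm : Matrix (Fin d) (Fin d) ℂ → ℝ)
    (M : Matrix (Fin N × Fin d) (Fin N × Fin d) ℂ) : ℝ :=
  ⨆ i : Fin N, ∑ j : Fin N, nrm (Matrix.of fun a b => M (i, a) (j, b))

/-- The lifted matrix `A^{(i)} = Ω_i ⊗ A_i`. -/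
def liftA {N d : ℕ} (ω : Matrix (Fin N) (Fin N) ℂ)
    (A : Fin N → Matrix (Fin d) (Fin d) ℂ) (i : Fin N) :
    Matrix (Fin N × Fin d) (Fin N × Fin d) ℂ :=
  OmegaM ω i ⊗ₖ A i

/-- Spectral radius of a complex matrix, as a real number. -/
noncomputable def sprad {m : Type*} [Fintype m] [DecidableEq m] (M : Matrix m m ℂ) : ℝ :=
  (spectralRadius ℂ M).toReal

/-- `ρ_n(𝒜, Ω)`. -/
noncomputable def rhoMark {N d : ℕ} (nrm : Matrix (Fin d) (Fin d) ℂ → ℝ)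
    (ω : Matrix (Fin N) (Fin N) ℂ) (A : Fin N → Matrix (Fin d) (Fin d) ℂ) (n : ℕ) : ℝ :=
  sSup {x : ℝ | ∃ i : ℕ → Fin N, Adm ω i n ∧
    x = nrm (seqProd (fun k => A (i k)) n) ^ ((1 : ℝ) / n)}

/-- `ρ^{(per)}_n(𝒜, Ω)`. -/
noncomputable def rhoPerMark {N d : ℕ} (nrm : Matrix (Fin d) (Fin d) ℂ → ℝ)
    (ω : Matrix (Fin N) (Fin N) ℂ) (A : Fin N → Matrix (Fin d) (Fin d) ℂ) (n : ℕ) : ℝ :=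
  sSup {x : ℝ | ∃ i : ℕ → Fin N, PerAdm ω i n ∧
    x = nrm (seqProd (fun k => A (i k)) n) ^ ((1 : ℝ) / n)}

/-- `ρ^{(0)}_n(𝒜, Ω)`. -/
noncomputable def rhoZeroMark {N d : ℕ} (nrm : Matrix (Fin d) (Fin d) ℂ → ℝ)
    (ω : Matrix (Fin N) (Fin N) ℂ) (A : Fin N → Matrix (Fin d) (Fin d) ℂ) (n : ℕ) : ℝ :=
  sSup {x : ℝ | ∃ i : ℕ → Fin N, AdmZero ω i n ∧
    x = nrm (seqProd (fun k => A (i k)) n) ^ ((1 : ℝ) / n)}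

/-- `ρ^{(∞)}_n(𝒜, Ω)`. -/
noncomputable def rhoInfMark {N d : ℕ} (nrm : Matrix (Fin d) (Fin d) ℂ → ℝ)
    (ω : Matrix (Fin N) (Fin N) ℂ) (A : Fin N → Matrix (Fin d) (Fin d) ℂ) (n : ℕ) : ℝ :=
  sSup {x : ℝ | ∃ i : ℕ → Fin N, AdmInf ω i n ∧
    x = nrm (seqProd (fun k => A (i k)) n) ^ ((1 : ℝ) / n)}

/-- `ρ̂_n(𝒜, Ω)`. -/
noncomputable def rhoHatMark {N d : ℕ} (ω : Matrix (Fin N) (Fin N) ℂ)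
    (A : Fin N → Matrix (Fin d) (Fin d) ℂ) (n : ℕ) : ℝ :=
  sSup {x : ℝ | ∃ i : ℕ → Fin N, Adm ω i n ∧
    x = sprad (seqProd (fun k => A (i k)) n) ^ ((1 : ℝ) / n)}

/-- `ρ̂^{(per)}_n(𝒜, Ω)`. -/
noncomputable def rhoHatPerMark {N d : ℕ} (ω : Matrix (Fin N) (Fin N) ℂ)
    (A : Fin N → Matrix (Fin d) (Fin d) ℂ) (n : ℕ) : ℝ :=
  sSup {x : ℝ | ∃ i : ℕ → Fin N, PerAdm ω i n ∧
    x = sprad (seqProd (fun k => A (i k)) n) ^ ((1 : ℝ) / n)}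

lemma seqProd_succ {α : Type*} [Monoid α] (A : ℕ → α) (n : ℕ) :
    seqProd A (n + 1) = A n * seqProd A n := by
  simp [seqProd, List.range_succ]

lemma seqProd_kron {N d : ℕ} (B : ℕ → Matrix (Fin N) (Fin N) ℂ)
    (C : ℕ → Matrix (Fin d) (Fin d) ℂ) (n : ℕ) :
    seqProd (fun k => B k ⊗ₖ C k) n = seqProd B n ⊗ₖ seqProd C n := by
  induction n with
  | zero => simp [seqProd, Matrix.one_kronecker_one]
  | succ n ih =>
      rw [seqProd_succ, seqProd_succ, seqProd_succ, ih, Matrix.mul_kronecker_mul]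

lemma vmv_mul {N : ℕ} (a b c e : Fin N → ℂ) :
    vecMulVec a b * vecMulVec c e = (b ⬝ᵥ c) • vecMulVec a e := by
  ext x y
  simp only [Matrix.mul_apply, vecMulVec_apply, Matrix.smul_apply, smul_eq_mul, dotProduct]
  rw [Finset.sum_mul]
  exact Finset.sum_congr rfl fun k _ => by ring

lemma omega_seqProd {N : ℕ} (ω : Matrix (Fin N) (Fin N) ℂ) (i : ℕ → Fin N) (n : ℕ)
    (hn : 1 ≤ n) (hadm : ∀ k, k + 1 < n → ω (i (k + 1)) (i k) = 1) :
    seqProd (fun k => OmegaM ω (i k)) n =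
      vecMulVec (fun j => ω j (i (n - 1))) (fun k => if k = i 0 then 1 else 0) := by
  induction n, hn using Nat.le_induction with
  | base =>
      have : seqProd (fun k => OmegaM ω (i k)) 1 = OmegaM ω (i 0) := by
        simp [seqProd, List.range_succ]
      rw [this]; rfl
  | succ n hn ih =>
      have hadm' : ∀ k, k + 1 < n → ω (i (k + 1)) (i k) = 1 := fun k hk =>
        hadm k (by omega)
      rw [seqProd_succ, ih hadm', OmegaM, vmv_mul]
      have hdot : (fun k => if k = i n then (1 : ℂ) else 0) ⬝ᵥ
          (fun j => ω j (i (n - 1))) = 1 := by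
        simp only [dotProduct, ite_mul, one_mul, zero_mul]
        rw [Finset.sum_ite_eq' Finset.univ (i n) (fun j => ω j (i (n - 1)))]
        have : n - 1 + 1 = n := by omega
        simp only [Finset.mem_univ, if_true]
        rw [← this]; exact hadm (n - 1) (by omega)
      rw [hdot, one_smul]
      simp

lemma key_unit {m p : Type*} [Fintype m] [Fintype p] [DecidableEq m]
    [DecidableEq p] (X : Matrix m p ℂ) (Y : Matrix p m ℂ) {z : ℂ} (hz : z ≠ 0)
    (h : IsUnit (z • (1 : Matrix p p ℂ) - Y * X)) :
    IsUnit (z • (1 : Matrix m m ℂ) - X * Y) := by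
    obtain ⟨u, hu⟩ := h
    set W : Matrix p p ℂ := ↑u⁻¹ with hW
    have hWl : (z • (1 : Matrix p p ℂ) - Y * X) * W = 1 := by
      rw [hW, ← hu]; exact u.mul_inv
    have hmain : (z • (1 : Matrix m m ℂ) - X * Y) * (1 + X * W * Y) = z • 1 := by
      have h1 : (z • (1 : Matrix m m ℂ)) * (X * W * Y)
          = X * ((z • (1 : Matrix p p ℂ)) * W) * Y := by
        simp only [Matrix.smul_mul, Matrix.mul_smul, Matrix.one_mul, Matrix.mul_assoc]
      have h2 : X * Y * (X * W * Y) = X * ((Y * X) * W) * Y := by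
        simp only [Matrix.mul_assoc]
      have h3 : X * ((z • (1 : Matrix p p ℂ)) * W) * Y - X * ((Y * X) * W) * Y
          = X * Y := by
        rw [← Matrix.sub_mul, ← Matrix.mul_sub, ← Matrix.sub_mul, hWl, Matrix.mul_one]
      calc (z • (1 : Matrix m m ℂ) - X * Y) * (1 + X * W * Y)
          = (z • 1 + (z • (1 : Matrix m m ℂ)) * (X * W * Y))
            - (X * Y + X * Y * (X * W * Y)) := by
            rw [Matrix.sub_mul, Matrix.mul_add, Matrix.mul_add, Matrix.mul_one,
              Matrix.mul_one]
        _ = z • 1 + (X * ((z • (1 : Matrix p p ℂ)) * W) * Y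
              - X * ((Y * X) * W) * Y) - X * Y := by rw [h1, h2]; abel
        _ = z • 1 := by rw [h3]; abel
    have hone : (z • (1 : Matrix m m ℂ) - X * Y) * (z⁻¹ • (1 + X * W * Y)) = 1 := by
      rw [Matrix.mul_smul, hmain, smul_smul, inv_mul_cancel₀ hz, one_smul]
    exact ⟨⟨_, _, hone, mul_eq_one_comm.mp hone⟩, rfl⟩

lemma spec_mul_comm_nonzero {m p : Type*} [Fintype m] [Fintype p] [DecidableEq m]
    [DecidableEq p] (X : Matrix m p ℂ) (Y : Matrix p m ℂ) {z : ℂ} (hz : z ≠ 0) :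
    z ∈ spectrum ℂ (X * Y) ↔ z ∈ spectrum ℂ (Y * X) := by
  constructor <;> intro h <;> rw [spectrum.mem_iff] at h ⊢ <;>
    rw [Algebra.algebraMap_eq_smul_one] at h ⊢ <;> intro hu
  · exact h (key_unit X Y hz hu)
  · exact h (key_unit Y X hz hu)

lemma sup_spec_eq {A B : Type*} [Ring A] [Ring B] [Algebra ℂ A] [Algebra ℂ B]
    (a : A) (b : B) (h : ∀ z : ℂ, z ≠ 0 → (z ∈ spectrum ℂ a ↔ z ∈ spectrum ℂ b)) :
    spectralRadius ℂ a = spectralRadius ℂ b := by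
  rw [spectralRadius, spectralRadius]
  apply le_antisymm <;> refine iSup₂_le fun z hz => ?_
  · rcases eq_or_ne z 0 with rfl | h0
    · simp
    · exact le_iSup₂ (f := fun z (_ : z ∈ spectrum ℂ b) => (‖z‖₊ : ENNReal)) z
        ((h z h0).mp hz)
  · rcases eq_or_ne z 0 with rfl | h0
    · simp
    · exact le_iSup₂ (f := fun z (_ : z ∈ spectrum ℂ a) => (‖z‖₊ : ENNReal)) z
        ((h z h0).mpr hz)

theorem stmt8 {N d : ℕ} (ω : Matrix (Fin N) (Fin N) ℂ)
    (hω : ∀ a b, ω a b = 0 ∨ ω a b = 1)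
    (A : Fin N → Matrix (Fin d) (Fin d) ℂ) (i : ℕ → Fin N) (n : ℕ) (hn : 1 ≤ n)
    (hper : PerAdm ω i n) :
    spectralRadius ℂ (seqProd (fun k => liftA ω A (i k)) n) =
      spectralRadius ℂ (seqProd (fun k => A (i k)) n) := by
  obtain ⟨⟨hadm, -⟩, hper0⟩ := hper
  set P := seqProd (fun k => A (i k)) n with hP
  set u : Fin N → ℂ := fun j => ω j (i (n - 1)) with hu
  set v : Fin N → ℂ := fun k => if k = i 0 then 1 else 0 with hv
  set X : Matrix (Fin N) (Fin 1) ℂ := Matrix.of fun j _ => u j with hX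
  set Y : Matrix (Fin 1) (Fin N) ℂ := Matrix.of fun _ k => v k with hY
  have hlift : seqProd (fun k => liftA ω A (i k)) n = vecMulVec u v ⊗ₖ P := by
    rw [show (fun k => liftA ω A (i k)) = fun k => OmegaM ω (i k) ⊗ₖ A (i k) from rfl,
      seqProd_kron, omega_seqProd ω i n hn hadm]
  have hXY : X * Y = vecMulVec u v := by
    ext a b
    simp [hX, hY, Matrix.mul_apply, vecMulVec_apply]
  have hYX : Y * X = 1 := by
    ext a b
    have ha : a = b := Subsingleton.elim a b
    subst ha
    simp only [Matrix.mul_apply, hX, hY, Matrix.of_apply, hv, ite_mul, one_mul, zero_mul,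
      Matrix.one_apply_eq]
    rw [Finset.sum_ite_eq' Finset.univ (i 0) u]
    simp [hu, hper0]
  have hM : seqProd (fun k => liftA ω A (i k)) n =
      (X ⊗ₖ (1 : Matrix (Fin d) (Fin d) ℂ)) * (Y ⊗ₖ P) := by
    rw [← Matrix.mul_kronecker_mul, hXY, Matrix.one_mul]
    exact hlift
  have hswap : (Y ⊗ₖ P) * (X ⊗ₖ (1 : Matrix (Fin d) (Fin d) ℂ)) = (1 : Matrix (Fin 1) (Fin 1) ℂ) ⊗ₖ P := by
    rw [← Matrix.mul_kronecker_mul, hYX, Matrix.mul_one]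
  -- spectrum of 1 ⊗ₖ P equals spectrum of P via reindexing
  let e : Fin 1 × Fin d ≃ Fin d :=
    ⟨Prod.snd, fun x => (0, x), fun p => by
      rcases p with ⟨a, b⟩
      rw [Subsingleton.elim a (0 : Fin 1)], fun x => rfl⟩
  have hre : Matrix.reindexAlgEquiv ℂ ℂ e ((1 : Matrix (Fin 1) (Fin 1) ℂ) ⊗ₖ P) = P := by
    ext a b
    simp [Matrix.reindexAlgEquiv_apply, Matrix.reindex_apply, Matrix.submatrix_apply, e,
      Matrix.kroneckerMap_apply, Matrix.one_apply]
  have hspec1 : spectrum ℂ ((1 : Matrix (Fin 1) (Fin 1) ℂ) ⊗ₖ P) = spectrum ℂ P := by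
    have h := AlgEquiv.spectrum_eq (Matrix.reindexAlgEquiv ℂ ℂ e)
      ((1 : Matrix (Fin 1) (Fin 1) ℂ) ⊗ₖ P)
    rw [hre] at h
    exact h.symm
  apply sup_spec_eq
  intro z hz
  rw [hM, spec_mul_comm_nonzero _ _ hz, hswap, hspec1]
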